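/- Let S₁ = [[−1,0,1],[0,1,0],[0,0,1]], S₂ = [[1,0,0],[0,−1,1],[0,0,1]], S₃ = [[1,0,0],[0,1,0],[2,3,−1]] be integer 3×3 matrices acting on column vectors, and let Q(x₁,x₂,x₃) = 2x₁² + 3x₂² + x₃² − 2x₁x₃ − 3x₂x₃. Then: (i) each Sᵢ preserves Q, i.e. Q(Sᵢ x) = Q(x) for all x ∈ ℤ³; (ii) orderOf S₁ = orderOf S₂ = orderOf S₃ = 2, orderOf (S₂S₃) = 6, orderOf (S₃S₁) = 4 and orderOf (S₁S₂) = 2 (so the Coxeter relations of the triangle group Δ(6,4,2) hold); and (iii) the subgroup of GL₃(ℤ) generated by S₁, S₂, S₃ is infinite. -/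
import Mathlib

/-- The reflection `s₁` of the `(6,4,2)`-triangle group in the root basis. -/
def refl1 : Matrix (Fin 3) (Fin 3) ℤ := !![-1, 0, 1; 0, 1, 0; 0, 0, 1]

/-- The reflection `s₂` of the `(6,4,2)`-triangle group in the root basis. -/
def refl2 : Matrix (Fin 3) (Fin 3) ℤ := !![1, 0, 0; 0, -1, 1; 0, 0, 1]

/-- The reflection `s₃` of the `(6,4,2)`-triangle group in the root basis. -/
def refl3 : Matrix (Fin 3) (Fin 3) ℤ := !![1, 0, 0; 0, 1, 0; 2, 3, -1]

/-- The Tits quadratic form of the `(6,4,2)`-triangle group, over `ℤ`. -/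
def titsFormZ (x : Fin 3 → ℤ) : ℤ :=
  2 * x 0 ^ 2 + 3 * x 1 ^ 2 + x 2 ^ 2 - 2 * x 0 * x 2 - 3 * x 1 * x 2

lemma aux_ord1 : orderOf refl1 = 2 := by
  rw [orderOf_eq_iff (by norm_num)]
  constructor
  · decide
  · decide

lemma aux_ord2 : orderOf refl2 = 2 := by
  rw [orderOf_eq_iff (by norm_num)]
  exact ⟨by decide, by decide⟩

lemma aux_ord3 : orderOf refl3 = 2 := by
  rw [orderOf_eq_iff (by norm_num)]
  exact ⟨by decide, by decide⟩

lemma aux_ord23 : orderOf (refl2 * refl3) = 6 := by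
  rw [orderOf_eq_iff (by norm_num)]
  exact ⟨by decide, by decide⟩

lemma aux_ord31 : orderOf (refl3 * refl1) = 4 := by
  rw [orderOf_eq_iff (by norm_num)]
  exact ⟨by decide, by decide⟩

lemma aux_ord12 : orderOf (refl1 * refl2) = 2 := by
  rw [orderOf_eq_iff (by norm_num)]
  exact ⟨by decide, by decide⟩

/-- Growth of powers of the Coxeter element `S₁S₂S₃` applied to `(1,1,1)`. -/
lemma aux_growth (n : ℕ) :
    letI w := ((refl1 * refl2 * refl3) ^ n).mulVec ![1, 1, 1]
    0 < w 0 ∧ w 0 = w 1 ∧ w 0 ≤ w 2 ∧ w 2 < 2 * w 0 ∧ (n : ℤ) < w 0 := by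
  induction n with
  | zero => simp [Matrix.mulVec, dotProduct, Fin.sum_univ_three]
  | succ n ih =>
    set w := ((refl1 * refl2 * refl3) ^ n).mulVec ![1, 1, 1] with hw
    have hstep : ((refl1 * refl2 * refl3) ^ (n + 1)).mulVec ![1, 1, 1]
        = (refl1 * refl2 * refl3).mulVec w := by
      rw [pow_succ', ← Matrix.mulVec_mulVec, hw]
    simp only [hstep]
    have h0 : (refl1 * refl2 * refl3).mulVec w 0 = w 0 + 3 * w 1 - w 2 := by
      simp [refl1, refl2, refl3, Matrix.mulVec, dotProduct,
        Fin.sum_univ_three, Matrix.mul_fin_three]; ring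
    have h1 : (refl1 * refl2 * refl3).mulVec w 1 = 2 * w 0 + 2 * w 1 - w 2 := by
      simp [refl1, refl2, refl3, Matrix.mulVec, dotProduct,
        Fin.sum_univ_three, Matrix.mul_fin_three]; ring
    have h2 : (refl1 * refl2 * refl3).mulVec w 2 = 2 * w 0 + 3 * w 1 - w 2 := by
      simp [refl1, refl2, refl3, Matrix.mulVec, dotProduct,
        Fin.sum_univ_three, Matrix.mul_fin_three]; ring
    rw [h0, h1, h2]
    obtain ⟨a, b, c, d, e⟩ := ih
    push_cast
    omega

/-- The matrices `S₁, S₂, S₃` preserve the Tits form `Q`, satisfy the Coxeter relations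
of the triangle group `Δ(6,4,2)` (each `Sᵢ` has order `2`, and `S₂S₃`, `S₃S₁`, `S₁S₂`
have orders `6`, `4`, `2` respectively), and generate an infinite subgroup
of `GL₃(ℤ)`. -/
theorem triangle_group_642_reflections
    (T₁ T₂ T₃ : GL (Fin 3) ℤ)
    (h₁ : (T₁ : Matrix (Fin 3) (Fin 3) ℤ) = refl1)
    (h₂ : (T₂ : Matrix (Fin 3) (Fin 3) ℤ) = refl2)
    (h₃ : (T₃ : Matrix (Fin 3) (Fin 3) ℤ) = refl3) :
    (∀ x : Fin 3 → ℤ, titsFormZ (refl1.mulVec x) = titsFormZ x ∧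
      titsFormZ (refl2.mulVec x) = titsFormZ x ∧ titsFormZ (refl3.mulVec x) = titsFormZ x) ∧
    (orderOf T₁ = 2 ∧ orderOf T₂ = 2 ∧ orderOf T₃ = 2 ∧
      orderOf (T₂ * T₃) = 6 ∧ orderOf (T₃ * T₁) = 4 ∧ orderOf (T₁ * T₂) = 2) ∧
    Infinite (Subgroup.closure ({T₁, T₂, T₃} : Set (GL (Fin 3) ℤ))) := by
  refine ⟨?_, ⟨?_, ?_, ?_, ?_, ?_, ?_⟩, ?_⟩
  · intro x
    refine ⟨?_, ?_, ?_⟩ <;>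
      simp [titsFormZ, refl1, refl2, refl3, Matrix.mulVec, dotProduct,
        Fin.sum_univ_three] <;> ring
  · rw [← orderOf_units, h₁, aux_ord1]
  · rw [← orderOf_units, h₂, aux_ord2]
  · rw [← orderOf_units, h₃, aux_ord3]
  · rw [← orderOf_units, Units.val_mul, h₂, h₃, aux_ord23]
  · rw [← orderOf_units, Units.val_mul, h₃, h₁, aux_ord31]
  · rw [← orderOf_units, Units.val_mul, h₁, h₂, aux_ord12]
  · set g : GL (Fin 3) ℤ := T₁ * T₂ * T₃ with hgdef
    have hgM : (g : Matrix (Fin 3) (Fin 3) ℤ) = refl1 * refl2 * refl3 := by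
      simp [hgdef, Units.val_mul, h₁, h₂, h₃]
    have hfin : ¬ IsOfFinOrder g := by
      intro h
      obtain ⟨n, hn, hgn⟩ := isOfFinOrder_iff_pow_eq_one.mp h
      have hM : (refl1 * refl2 * refl3) ^ n = 1 := by
        rw [← hgM, ← Units.val_pow_eq_pow_val, hgn, Units.val_one]
      have := (aux_growth n).2.2.2.2
      rw [hM] at this
      simp [Matrix.mulVec, dotProduct, Fin.sum_univ_three] at this
      omega
    have hgmem : g ∈ Subgroup.closure ({T₁, T₂, T₃} : Set (GL (Fin 3) ℤ)) := by
      refine mul_mem (mul_mem ?_ ?_) ?_ <;>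
        exact Subgroup.subset_closure (by simp)
    exact Infinite.of_injective
      (fun n : ℕ => (⟨g ^ n, pow_mem hgmem n⟩ : Subgroup.closure ({T₁, T₂, T₃} : Set (GL (Fin 3) ℤ))))
      (fun a b hab => injective_pow_iff_not_isOfFinOrder.mpr hfin
        (by simpa [Subtype.ext_iff] using hab))
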